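/- Fix X ∈ ℝ^{n×k} and y ∈ ℝ^n, and let U be the set of matrices Δ ∈ ℝ^{n×k} whose every entry has absolute value at most ρ > 0. Then for every β ∈ ℝ^k, ∫_U ‖y − (X + Δ)β‖_2^2 dΔ = (2ρ)^{nk} · (‖y − Xβ‖_2^2 + (nρ^2/3)·‖β‖_2^2). Consequently, minimizing the averaged squared residual over U is equivalent to ridge regression with penalty λ = nρ^2/3. -/

import Mathlib

open MeasureTheory

lemma box_int {n k : ℕ} {ρ : ℝ} (f : Fin n → Fin k → ℝ → ℝ) :
    ∫ Δ : Fin n → Fin k → ℝ in {Δ | ∀ a b, |Δ a b| ≤ ρ}, ∏ a, ∏ b, f a b (Δ a b)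
      = ∏ a, ∏ b, ∫ t in Set.Icc (-ρ) ρ, f a b t := by
  have hset : {Δ : Fin n → Fin k → ℝ | ∀ a b, |Δ a b| ≤ ρ}
      = Set.univ.pi (fun _a => Set.univ.pi fun _b => Set.Icc (-ρ) ρ) := by
    ext Δ
    simp only [Set.mem_setOf_eq, Set.mem_pi, Set.mem_univ, forall_true_left, Set.mem_Icc, abs_le]
  have hms : MeasurableSet (Set.univ.pi (fun _a : Fin n => Set.univ.pi fun _b : Fin k => Set.Icc (-ρ) ρ)) :=
    MeasurableSet.univ_pi fun _a => MeasurableSet.univ_pi fun _b => measurableSet_Icc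
  rw [hset, ← integral_indicator hms]
  have hind : (Set.univ.pi fun _a : Fin n => Set.univ.pi fun _b : Fin k => Set.Icc (-ρ) ρ).indicator
      (fun Δ => ∏ a, ∏ b, f a b (Δ a b))
      = fun Δ => ∏ a, ∏ b, (Set.Icc (-ρ) ρ).indicator (f a b) (Δ a b) := by
    funext Δ
    by_cases h : Δ ∈ Set.univ.pi fun _a : Fin n => Set.univ.pi fun _b : Fin k => Set.Icc (-ρ) ρ
    · rw [Set.indicator_of_mem h]
      refine Finset.prod_congr rfl fun a _ => Finset.prod_congr rfl fun b _ => ?_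
      rw [Set.indicator_of_mem (h a (Set.mem_univ a) b (Set.mem_univ b))]
    · rw [Set.indicator_of_notMem h]
      symm
      simp only [Set.mem_pi, Set.mem_univ, forall_true_left] at h
      push_neg at h
      obtain ⟨a, b, hb⟩ := h
      exact Finset.prod_eq_zero (Finset.mem_univ a)
        (Finset.prod_eq_zero (Finset.mem_univ b) (by rw [Set.indicator_of_notMem hb]))
  rw [hind]
  beta_reduce
  erw [MeasureTheory.integral_fintype_prod_eq_prod
    (μ := fun _ => volume) (f := fun a (row : Fin k → ℝ) => ∏ b, (Set.Icc (-ρ) ρ).indicator (f a b) (row b))]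
  refine Finset.prod_congr rfl fun a _ => ?_
  erw [MeasureTheory.integral_fintype_prod_eq_prod
    (μ := fun _ => volume) (f := fun b (t : ℝ) => (Set.Icc (-ρ) ρ).indicator (f a b) t)]
  exact Finset.prod_congr rfl fun b _ => integral_indicator measurableSet_Icc

lemma int_Icc_one {ρ : ℝ} (hρ : 0 < ρ) : ∫ _t in Set.Icc (-ρ) ρ, (1:ℝ) = 2 * ρ := by
  rw [setIntegral_const, measureReal_def, Real.volume_Icc, smul_eq_mul, mul_one,
    ENNReal.toReal_ofReal (by linarith)]
  ring

lemma int_Icc_id {ρ : ℝ} (hρ : 0 < ρ) : ∫ t in Set.Icc (-ρ) ρ, t = 0 := by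
  rw [MeasureTheory.integral_Icc_eq_integral_Ioc,
    ← intervalIntegral.integral_of_le (by linarith : -ρ ≤ ρ), integral_id]
  ring

lemma int_Icc_sq {ρ : ℝ} (hρ : 0 < ρ) : ∫ t in Set.Icc (-ρ) ρ, t ^ 2 = 2 * ρ ^ 3 / 3 := by
  rw [MeasureTheory.integral_Icc_eq_integral_Ioc,
    ← intervalIntegral.integral_of_le (by linarith : -ρ ≤ ρ), integral_pow]
  ring

lemma box_M0 {n k : ℕ} {ρ : ℝ} (hρ : 0 < ρ) :
    ∫ _Δ : Fin n → Fin k → ℝ in {Δ | ∀ a b, |Δ a b| ≤ ρ}, (1:ℝ) = (2 * ρ) ^ (n * k) := by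
  have h := box_int (n := n) (k := k) (ρ := ρ) (fun _ _ _ => (1:ℝ))
  simp only [Finset.prod_const_one] at h
  rw [h]
  simp only [int_Icc_one hρ, Finset.prod_const, Finset.card_univ, Fintype.card_fin, ← pow_mul,
    mul_comm k n]

lemma box_M1 {n k : ℕ} {ρ : ℝ} (hρ : 0 < ρ) (a0 : Fin n) (b0 : Fin k) :
    ∫ Δ : Fin n → Fin k → ℝ in {Δ | ∀ a b, |Δ a b| ≤ ρ}, Δ a0 b0 = 0 := by
  have h := box_int (n := n) (k := k) (ρ := ρ)
    (fun a b t => if a = a0 then (if b = b0 then t else 1) else 1)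
  have hpt : ∀ Δ : Fin n → Fin k → ℝ,
      (∏ a, ∏ b, (if a = a0 then (if b = b0 then Δ a b else 1) else 1)) = Δ a0 b0 := by
    intro Δ
    rw [Fintype.prod_eq_single a0 (fun a ha => by simp [ha])]
    simp only [if_pos rfl]
    rw [Fintype.prod_eq_single b0 (fun b hb => by simp [hb])]
    simp
  simp only [hpt] at h
  rw [h]
  refine Finset.prod_eq_zero (Finset.mem_univ a0) ?_
  refine Finset.prod_eq_zero (Finset.mem_univ b0) ?_
  simp only [if_pos rfl]
  exact int_Icc_id hρ

lemma box_M2 {n k : ℕ} {ρ : ℝ} (hn : 1 ≤ n) (hk : 1 ≤ k) (hρ : 0 < ρ) (a0 : Fin n) (b0 : Fin k) :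
    ∫ Δ : Fin n → Fin k → ℝ in {Δ | ∀ a b, |Δ a b| ≤ ρ}, (Δ a0 b0) ^ 2
      = (2 * ρ) ^ (n * k) * (ρ ^ 2 / 3) := by
  have h := box_int (n := n) (k := k) (ρ := ρ)
    (fun a b t => if a = a0 then (if b = b0 then t ^ 2 else 1) else 1)
  have hpt : ∀ Δ : Fin n → Fin k → ℝ,
      (∏ a, ∏ b, (if a = a0 then (if b = b0 then (Δ a b) ^ 2 else 1) else 1)) = (Δ a0 b0) ^ 2 := by
    intro Δ
    rw [Fintype.prod_eq_single a0 (fun a ha => by simp [ha])]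
    simp [Fintype.prod_ite_eq']
  simp only [hpt] at h
  rw [h]
  have hrow1 : (∏ b, ∫ t in Set.Icc (-ρ) ρ,
      (if a0 = a0 then (if b = b0 then t ^ 2 else 1) else 1))
      = (2 * ρ ^ 3 / 3) * (2 * ρ) ^ (k - 1) := by
    simp only [eq_self_iff_true, if_true]
    rw [← Finset.mul_prod_erase Finset.univ _ (Finset.mem_univ b0)]
    have h1 : (∫ t in Set.Icc (-ρ) ρ, (if b0 = b0 then t ^ 2 else 1)) = 2 * ρ ^ 3 / 3 := by
      simp only [eq_self_iff_true, if_true]; exact int_Icc_sq hρ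
    rw [h1]
    congr 1
    rw [Finset.prod_congr rfl (fun b hb => by
        simp only [if_neg (Finset.ne_of_mem_erase hb)]
        exact int_Icc_one hρ),
      Finset.prod_const, Finset.card_erase_of_mem (Finset.mem_univ b0),
      Finset.card_univ, Fintype.card_fin]
  have hrow0 : ∀ a : Fin n, a ≠ a0 → (∏ b, ∫ t in Set.Icc (-ρ) ρ,
      (if a = a0 then (if b = b0 then t ^ 2 else 1) else 1)) = (2 * ρ) ^ k := by
    intro a ha
    rw [Finset.prod_congr rfl (fun b _ => by
        simp only [if_neg ha]
        exact int_Icc_one hρ),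
      Finset.prod_const, Finset.card_univ, Fintype.card_fin]
  rw [← Finset.mul_prod_erase Finset.univ _ (Finset.mem_univ a0), hrow1,
    Finset.prod_congr rfl (fun a ha => hrow0 a (Finset.ne_of_mem_erase ha)),
    Finset.prod_const, Finset.card_erase_of_mem (Finset.mem_univ a0),
    Finset.card_univ, Fintype.card_fin]
  have hexp : n * k = 1 + (k - 1) + k * (n - 1) := by
    cases n with
    | zero => omega
    | succ m => cases k with
      | zero => omega
      | succ l => simp only [Nat.succ_sub_one]; ring
  rw [hexp, pow_add, pow_add, ← pow_mul]
  ring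

lemma box_M2' {n k : ℕ} {ρ : ℝ} (hρ : 0 < ρ) (a0 : Fin n) (b0 b1 : Fin k) (hbb : b0 ≠ b1) :
    ∫ Δ : Fin n → Fin k → ℝ in {Δ | ∀ a b, |Δ a b| ≤ ρ}, Δ a0 b0 * Δ a0 b1 = 0 := by
  have h := box_int (n := n) (k := k) (ρ := ρ)
    (fun a b t => if a = a0 then (if b = b0 then t else if b = b1 then t else 1) else 1)
  have hpt : ∀ Δ : Fin n → Fin k → ℝ,
      (∏ a, ∏ b, (if a = a0 then (if b = b0 then Δ a b else if b = b1 then Δ a b else 1) else 1))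
        = Δ a0 b0 * Δ a0 b1 := by
    intro Δ
    rw [Fintype.prod_eq_single a0 (fun a ha => by simp [ha])]
    simp only [eq_self_iff_true, if_true]
    have hsplit : ∀ b : Fin k,
        (if b = b0 then Δ a0 b else if b = b1 then Δ a0 b else 1)
          = (if b = b0 then Δ a0 b else 1) * (if b = b1 then Δ a0 b else 1) := by
      intro b
      by_cases h0 : b = b0
      · subst h0
        rw [if_pos rfl, if_pos rfl, if_neg hbb, mul_one]
      · by_cases h1 : b = b1 <;> simp [h0, h1, Ne.symm hbb]
    rw [Finset.prod_congr rfl (fun b _ => hsplit b), Finset.prod_mul_distrib]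
    simp [Fintype.prod_ite_eq']
  simp only [hpt] at h
  rw [h]
  refine Finset.prod_eq_zero (Finset.mem_univ a0) ?_
  refine Finset.prod_eq_zero (Finset.mem_univ b0) ?_
  have : (∫ t in Set.Icc (-ρ) ρ,
      (if a0 = a0 then (if b0 = b0 then t else if b0 = b1 then t else 1) else 1))
      = ∫ t in Set.Icc (-ρ) ρ, t := by
    simp only [eq_self_iff_true, if_true]
  rw [this]
  exact int_Icc_id hρ

theorem averaged_robust_box (n k : ℕ) (hn : 1 ≤ n) (hk : 1 ≤ k)
    (ρ : ℝ) (hρ : 0 < ρ) (X : Fin n → Fin k → ℝ) (y : Fin n → ℝ)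
    (U : Set (Fin n → Fin k → ℝ))
    (hU : U = {Δ | ∀ a b, |Δ a b| ≤ ρ}) :
    (∀ β : Fin k → ℝ,
      ∫ Δ in U, (∑ a, (y a - ∑ b, (X a b + Δ a b) * β b) ^ 2) =
        (2 * ρ) ^ (n * k) *
          ((∑ a, (y a - ∑ b, X a b * β b) ^ 2) + (n * ρ ^ 2 / 3) * ∑ b, (β b) ^ 2)) ∧
    (∀ β : Fin k → ℝ,
      (∀ β' : Fin k → ℝ,
        (∫ Δ in U, (∑ a, (y a - ∑ b, (X a b + Δ a b) * β b) ^ 2)) ≤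
          ∫ Δ in U, (∑ a, (y a - ∑ b, (X a b + Δ a b) * β' b) ^ 2)) ↔
      (∀ β' : Fin k → ℝ,
        (∑ a, (y a - ∑ b, X a b * β b) ^ 2) + (n * ρ ^ 2 / 3) * ∑ b, (β b) ^ 2 ≤
          (∑ a, (y a - ∑ b, X a b * β' b) ^ 2) + (n * ρ ^ 2 / 3) * ∑ b, (β' b) ^ 2)) := by
  subst hU
  have hcompact : IsCompact {Δ : Fin n → Fin k → ℝ | ∀ a b, |Δ a b| ≤ ρ} := by
    have hset : {Δ : Fin n → Fin k → ℝ | ∀ a b, |Δ a b| ≤ ρ}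
        = Set.univ.pi (fun _a => Set.univ.pi fun _b => Set.Icc (-ρ) ρ) := by
      ext Δ
      simp only [Set.mem_setOf_eq, Set.mem_pi, Set.mem_univ, forall_true_left, Set.mem_Icc,
        abs_le]
    rw [hset]
    exact isCompact_univ_pi fun _a => isCompact_univ_pi fun _b => isCompact_Icc
  have hint : ∀ g : (Fin n → Fin k → ℝ) → ℝ, Continuous g →
      IntegrableOn g {Δ : Fin n → Fin k → ℝ | ∀ a b, |Δ a b| ≤ ρ} volume :=
    fun g hg => hg.continuousOn.integrableOn_compact hcompact
  have hvol : (volume {Δ : Fin n → Fin k → ℝ | ∀ a b, |Δ a b| ≤ ρ}).toReal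
      = (2 * ρ) ^ (n * k) := by
    have h := box_M0 (n := n) (k := k) hρ
    rwa [setIntegral_const, smul_eq_mul, mul_one] at h
  have hca : ∀ (a : Fin n) (b : Fin k),
      Continuous fun Δ : Fin n → Fin k → ℝ => Δ a b :=
    fun a b => (continuous_apply b).comp (continuous_apply a)
  have part1 : ∀ β : Fin k → ℝ,
      ∫ Δ in {Δ : Fin n → Fin k → ℝ | ∀ a b, |Δ a b| ≤ ρ},
        (∑ a, (y a - ∑ b, (X a b + Δ a b) * β b) ^ 2) =
        (2 * ρ) ^ (n * k) *
          ((∑ a, (y a - ∑ b, X a b * β b) ^ 2) + (n * ρ ^ 2 / 3) * ∑ b, (β b) ^ 2) := by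
    intro β
    set r : Fin n → ℝ := fun a => y a - ∑ b, X a b * β b with hr
    have hexpand : ∀ Δ : Fin n → Fin k → ℝ,
        (∑ a, (y a - ∑ b, (X a b + Δ a b) * β b) ^ 2)
        = (∑ a, r a ^ 2)
          + ((∑ a, ∑ b, (-2 * r a * β b) * Δ a b)
          + (∑ a, ∑ b, ∑ b', (β b * β b') * (Δ a b * Δ a b'))) := by
      intro Δ
      have h1 : ∀ a, (y a - ∑ b, (X a b + Δ a b) * β b) ^ 2
          = r a ^ 2 + ((∑ b, (-2 * r a * β b) * Δ a b)
            + (∑ b, ∑ b', (β b * β b') * (Δ a b * Δ a b'))) := by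
        intro a
        have e1 : ∑ b, (X a b + Δ a b) * β b
            = (∑ b, X a b * β b) + ∑ b, Δ a b * β b := by
          rw [← Finset.sum_add_distrib]
          exact Finset.sum_congr rfl fun b _ => by ring
        have e2 : (∑ b, Δ a b * β b) ^ 2
            = ∑ b, ∑ b', (β b * β b') * (Δ a b * Δ a b') := by
          rw [sq, Finset.sum_mul_sum]
          exact Finset.sum_congr rfl fun b _ => Finset.sum_congr rfl fun b' _ => by ring
        have e3 : (-2 * r a) * (∑ b, Δ a b * β b) = ∑ b, (-2 * r a * β b) * Δ a b := by
          rw [Finset.mul_sum]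
          exact Finset.sum_congr rfl fun b _ => by ring
        have e4 : (y a - ((∑ b, X a b * β b) + ∑ b, Δ a b * β b)) ^ 2
            = r a ^ 2 + ((-2 * r a) * (∑ b, Δ a b * β b) + (∑ b, Δ a b * β b) ^ 2) := by
          rw [hr]; ring
        rw [e1, e4, e2, e3]
      rw [Finset.sum_congr rfl fun a _ => h1 a, Finset.sum_add_distrib,
        Finset.sum_add_distrib]
    have hcT1 : Continuous fun Δ : Fin n → Fin k → ℝ =>
        ∑ a, ∑ b, (-2 * r a * β b) * Δ a b :=
      continuous_finset_sum _ fun a _ => continuous_finset_sum _ fun b _ =>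
        continuous_const.mul (hca a b)
    have hcT2 : Continuous fun Δ : Fin n → Fin k → ℝ =>
        ∑ a, ∑ b, ∑ b', (β b * β b') * (Δ a b * Δ a b') :=
      continuous_finset_sum _ fun a _ => continuous_finset_sum _ fun b _ =>
        continuous_finset_sum _ fun b' _ =>
          continuous_const.mul ((hca a b).mul (hca a b'))
    simp only [hexpand]
    rw [integral_add (hint _ continuous_const) (hint (fun Δ => (∑ a, ∑ b, (-2 * r a * β b) * Δ a b) + ∑ a, ∑ b, ∑ b', (β b * β b') * (Δ a b * Δ a b')) (hcT1.add hcT2)),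
      integral_add (hint _ hcT1) (hint _ hcT2)]
    have hT0 : ∫ _Δ in {Δ : Fin n → Fin k → ℝ | ∀ a b, |Δ a b| ≤ ρ}, (∑ a, r a ^ 2)
        = (2 * ρ) ^ (n * k) * (∑ a, r a ^ 2) := by
      rw [setIntegral_const, measureReal_def, hvol, smul_eq_mul]
    have hT1 : ∫ Δ in {Δ : Fin n → Fin k → ℝ | ∀ a b, |Δ a b| ≤ ρ},
        (∑ a, ∑ b, (-2 * r a * β b) * Δ a b) = 0 := by
      rw [integral_finset_sum _ fun a _ => (hint (fun Δ => ∑ b, (-2 * r a * β b) * Δ a b) (continuous_finset_sum _ fun b _ =>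
        continuous_const.mul (hca a b)))]
      rw [Finset.sum_congr rfl fun a _ => integral_finset_sum _ fun b _ =>
        (hint (fun Δ => (-2 * r a * β b) * Δ a b) (continuous_const.mul (hca a b)))]
      rw [Finset.sum_congr rfl fun a _ => Finset.sum_congr rfl fun b _ => by
        rw [integral_const_mul, box_M1 hρ a b, mul_zero]]
      simp
    have hT2 : ∫ Δ in {Δ : Fin n → Fin k → ℝ | ∀ a b, |Δ a b| ≤ ρ},
        (∑ a, ∑ b, ∑ b', (β b * β b') * (Δ a b * Δ a b'))
        = (2 * ρ) ^ (n * k) * ((n * ρ ^ 2 / 3) * ∑ b, (β b) ^ 2) := by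
      rw [integral_finset_sum _ fun a _ => (hint (fun Δ => ∑ b, ∑ b', (β b * β b') * (Δ a b * Δ a b')) (continuous_finset_sum _ fun b _ =>
        continuous_finset_sum _ fun b' _ => continuous_const.mul ((hca a b).mul (hca a b'))))]
      rw [Finset.sum_congr rfl fun a _ => integral_finset_sum _ fun b _ =>
        (hint (fun Δ => ∑ b', (β b * β b') * (Δ a b * Δ a b')) (continuous_finset_sum _ fun b' _ =>
          continuous_const.mul ((hca a b).mul (hca a b'))))]
      rw [Finset.sum_congr rfl fun a _ => Finset.sum_congr rfl fun b _ =>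
        integral_finset_sum _ fun b' _ => (hint (fun Δ => (β b * β b') * (Δ a b * Δ a b')) (continuous_const.mul
          ((hca a b).mul (hca a b'))))]
      have hmono : ∀ (a : Fin n) (b b' : Fin k),
          ∫ Δ in {Δ : Fin n → Fin k → ℝ | ∀ a b, |Δ a b| ≤ ρ},
            (β b * β b') * (Δ a b * Δ a b')
          = if b' = b then β b ^ 2 * ((2 * ρ) ^ (n * k) * (ρ ^ 2 / 3)) else 0 := by
        intro a b b'
        by_cases hbb : b' = b
        · subst hbb
          rw [if_pos rfl, integral_const_mul]
          have : (∫ Δ in {Δ : Fin n → Fin k → ℝ | ∀ a b, |Δ a b| ≤ ρ}, Δ a b' * Δ a b')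
              = (2 * ρ) ^ (n * k) * (ρ ^ 2 / 3) := by
            have h2 := box_M2 hn hk hρ a b'
            simpa only [sq] using h2
          rw [this, ← sq]
        · rw [if_neg hbb, integral_const_mul, box_M2' hρ a b b' (fun h => hbb h.symm), mul_zero]
      rw [Finset.sum_congr rfl fun a _ => Finset.sum_congr rfl fun b _ =>
        Finset.sum_congr rfl fun b' _ => hmono a b b']
      simp only [Finset.sum_ite_eq', Finset.mem_univ, if_true, ite_true]
      rw [Finset.sum_const, Finset.card_univ, Fintype.card_fin, nsmul_eq_mul,
        ← Finset.sum_mul]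
      ring
    rw [hT0, hT1, hT2]
    ring
  refine ⟨part1, fun β => ?_⟩
  have hpos : (0:ℝ) < (2 * ρ) ^ (n * k) := pow_pos (by linarith) _
  constructor
  · intro h β'
    have h2 := h β'
    rw [part1 β, part1 β'] at h2
    exact le_of_mul_le_mul_left h2 hpos
  · intro h β'
    rw [part1 β, part1 β']
    exact mul_le_mul_of_nonneg_left (h β') hpos.le
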